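/- For all nonzero x, y ∈ ℂ, the relation r₁₂(x/y) L₁₃(x) L₂₃(y) = L₂₃(y) L₁₃(x) r₁₂(x/y) holds as an identity of 12×12 matrices acting on ℂ²⊗ℂ²⊗ℂ³. -/

import Mathlib

open Matrix

noncomputable section

/-- ω = e^{2πi/3}. -/
def ω : ℂ := Complex.exp (2 * Real.pi * Complex.I / 3)

/-- The 3×3 matrix X with rows (0,0,1),(1,0,0),(0,1,0). -/
def Xmat : Matrix (Fin 3) (Fin 3) ℂ := !![0,0,1; 1,0,0; 0,1,0]

/-- The 3×3 matrix Z = diag(1, ω, ω⁻¹). -/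
def Zmat : Matrix (Fin 3) (Fin 3) ℂ := !![1,0,0; 0,ω,0; 0,0,ω⁻¹]

/-- The 6×6 L-operator with blocks L¹₁ = xX, L¹₂ = Z, L²₁ = Z², L²₂ = xX². -/
def Lop (x : ℂ) : Matrix (Fin 2 × Fin 3) (Fin 2 × Fin 3) ℂ :=
  Matrix.of fun p q =>
    match p.1, q.1 with
    | 0, 0 => x * Xmat p.2 q.2
    | 0, 1 => Zmat p.2 q.2
    | 1, 0 => (Zmat * Zmat) p.2 q.2
    | 1, 1 => x * (Xmat * Xmat) p.2 q.2

/-- Lexicographic index map from Fin 2 pairs to Fin 4. -/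
def idx4 : Fin 2 × Fin 2 → Fin 4 :=
  fun p => ⟨2 * p.1.val + p.2.val, by have := p.1.isLt; have := p.2.isLt; omega⟩

/-- The symmetric six-vertex r-matrix (specialised), as a 4×4 matrix. -/
def r4 (z : ℂ) : Matrix (Fin 4) (Fin 4) ℂ :=
  !![ω * z - ω⁻¹ * z⁻¹, 0, 0, 0;
     0, z - z⁻¹, ω - ω⁻¹, 0;
     0, ω - ω⁻¹, z - z⁻¹, 0;
     0, 0, 0, ω * z - ω⁻¹ * z⁻¹]

/-- r(z) indexed by pairs (i,j), i,j ∈ Fin 2. -/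
def rop (z : ℂ) : Matrix (Fin 2 × Fin 2) (Fin 2 × Fin 2) ℂ :=
  Matrix.of fun p q => r4 z (idx4 p) (idx4 q)

/-- r₁₂ acting on ℂ²⊗ℂ²⊗ℂ³ (factors 1 and 2). -/
def r12 (u : ℂ) : Matrix (Fin 2 × Fin 2 × Fin 3) (Fin 2 × Fin 2 × Fin 3) ℂ :=
  Matrix.of fun p q => rop u (p.1, p.2.1) (q.1, q.2.1) * (if p.2.2 = q.2.2 then 1 else 0)

/-- L₁₃ acting on ℂ²⊗ℂ²⊗ℂ³ (factors 1 and 3). -/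
def L13 (u : ℂ) : Matrix (Fin 2 × Fin 2 × Fin 3) (Fin 2 × Fin 2 × Fin 3) ℂ :=
  Matrix.of fun p q => Lop u (p.1, p.2.2) (q.1, q.2.2) * (if p.2.1 = q.2.1 then 1 else 0)

/-- L₂₃ acting on ℂ²⊗ℂ²⊗ℂ³ (factors 2 and 3). -/
def L23 (u : ℂ) : Matrix (Fin 2 × Fin 2 × Fin 3) (Fin 2 × Fin 2 × Fin 3) ℂ :=
  Matrix.of fun p q => Lop u p.2 q.2 * (if p.1 = q.1 then 1 else 0)

lemma hprim : IsPrimitiveRoot ω 3 := by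
  have := Complex.isPrimitiveRoot_exp 3 (by norm_num)
  convert this using 2
  simp [ω]
lemma hω3 : ω ^ 3 = 1 := hprim.pow_eq_one
lemma hωne : ω ≠ 0 := fun h => by simpa [h] using hω3
lemma hω2 : ω ^ 2 = -ω - 1 := by
  have h : (ω - 1) * (ω ^ 2 + ω + 1) = 0 := by linear_combination hω3
  rcases mul_eq_zero.mp h with h1 | h2
  · exact absurd (sub_eq_zero.mp h1) (hprim.ne_one (by norm_num))
  · linear_combination h2
lemma hωinv : ω⁻¹ = -ω - 1 := inv_eq_of_mul_eq_one_left (by linear_combination -hω2)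
lemma hω4 : ω ^ 4 = ω := by linear_combination ω * hω3
lemma hω5 : ω ^ 5 = -ω - 1 := by linear_combination ω ^ 2 * hω3 + hω2
lemma hω6 : ω ^ 6 = 1 := by linear_combination (ω ^ 3 + 1) * hω3
lemma hω7 : ω ^ 7 = ω := by linear_combination (ω ^ 4 + ω) * hω3
lemma hω8 : ω ^ 8 = -ω - 1 := by linear_combination (ω ^ 5 + ω ^ 2) * hω3 + hω2

lemma Lop_apply' (x : ℂ) (i j : Fin 2) (a b : Fin 3) :
    Lop x (i, a) (j, b) =
      !![x * !![0,0,1; 1,0,0; 0,1,0] a b, !![1,0,0; 0,ω,0; 0,0,-ω-1] a b;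
         !![1,0,0; 0,-ω-1,0; 0,0,ω] a b, x * !![0,1,0; 0,0,1; 1,0,0] a b] i j := by
  fin_cases i <;> fin_cases j <;> fin_cases a <;> fin_cases b <;>
    simp [Lop, Xmat, Zmat, Matrix.mul_apply, Fin.sum_univ_three, hωinv, hω2] <;> ring_nf <;>
    simp [hω2] <;> ring

lemma rop_apply' (z : ℂ) (i j i' j' : Fin 2) :
    rop z (i, j) (i', j') =
      !![!![ω * z - ω⁻¹ * z⁻¹, 0; 0, 0], !![0, z - z⁻¹; ω - ω⁻¹, 0];
         !![0, ω - ω⁻¹; z - z⁻¹, 0], !![0, 0; 0, ω * z - ω⁻¹ * z⁻¹]] i j i' j' := by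
  fin_cases i <;> fin_cases j <;> fin_cases i' <;> fin_cases j' <;>
    simp [rop, r4, idx4] <;> rfl

lemma lhs_apply (u x y : ℂ) (i j i' j' : Fin 2) (k k' : Fin 3) :
    (r12 u * L13 x * L23 y) (i, j, k) (i', j', k') =
      ∑ a : Fin 2, ∑ b : Fin 2, rop u (i, j) (a, b) *
        ∑ l : Fin 3, Lop x (a, k) (i', l) * Lop y (b, l) (j', k') := by
  rw [Matrix.mul_assoc]
  fin_cases i <;> fin_cases j <;> fin_cases i' <;> fin_cases j' <;>
  · simp only [Matrix.mul_apply, Fintype.sum_prod_type, r12, L13, L23, Matrix.of_apply,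
      Fin.mk_zero, Fin.mk_one, Fin.isValue,
      mul_ite, ite_mul, mul_zero, zero_mul, mul_one, one_mul, Fin.sum_univ_two,
      Finset.sum_ite_eq, Finset.sum_ite_eq', Finset.mem_univ, if_true]
    try simp
    try ring_nf

set_option maxHeartbeats 2000000 in
lemma rhs_apply (u x y : ℂ) (i j i' j' : Fin 2) (k k' : Fin 3) :
    (L23 y * L13 x * r12 u) (i, j, k) (i', j', k') =
      ∑ a : Fin 2, ∑ b : Fin 2, (∑ l : Fin 3, Lop y (j, k) (b, l) * Lop x (i, l) (a, k')) *
        rop u (a, b) (i', j') := by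
  rw [Matrix.mul_assoc]
  fin_cases i <;> fin_cases j <;> fin_cases i' <;> fin_cases j' <;>
  · simp only [Matrix.mul_apply, Fintype.sum_prod_type, r12, L13, L23, Matrix.of_apply,
      Fin.mk_zero, Fin.mk_one, Fin.isValue,
      mul_ite, ite_mul, mul_zero, zero_mul, mul_one, one_mul, Fin.sum_univ_two,
      Finset.sum_ite_eq, Finset.sum_ite_eq', Finset.mem_univ, if_true]
    try simp
    try simp only [mul_add, add_mul, Finset.sum_add_distrib, Finset.mul_sum, Finset.sum_mul]
    try ring_nf
    try (simp only [Fin.sum_univ_three]; ring)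

set_option maxHeartbeats 4000000 in
/-- r₁₂(x/y) L₁₃(x) L₂₃(y) = L₂₃(y) L₁₃(x) r₁₂(x/y). -/
theorem r_L_L_intertwining (x y : ℂ) (hx : x ≠ 0) (hy : y ≠ 0) :
    r12 (x / y) * L13 x * L23 y = L23 y * L13 x * r12 (x / y) := by
  ext ⟨i, j, k⟩ ⟨i', j', k'⟩
  rw [lhs_apply, rhs_apply]
  fin_cases i <;> fin_cases j <;> fin_cases i' <;> fin_cases j' <;> fin_cases k <;> fin_cases k'
  all_goals
    simp only [Fin.sum_univ_two, Fin.sum_univ_three, rop_apply', Lop_apply', hωinv,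
      Matrix.cons_val', Matrix.cons_val_zero, Matrix.cons_val_one, Matrix.cons_val_two,
      Matrix.head_cons, Matrix.vecHead, Matrix.vecTail, Matrix.head_fin_const,
      Matrix.empty_val', Matrix.cons_val_fin_one, Function.comp]
  all_goals norm_num [Matrix.vecHead, Matrix.vecTail, Matrix.cons_val_two, Matrix.cons_val_one, Function.comp]
  all_goals try field_simp
  all_goals try (ring_nf; simp only [hω2, hω3, hω4, hω5, hω6, hω7, hω8]; try ring_nf)
  all_goals try ring
  all_goals try tauto
end
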